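/- Suppose 1, ε₁, …, ε_m are linearly independent over ℚ and each ε_j ∈ (−1,1). If t > 0, w ∈ Σ, and φ_t(w) = w, then exactly one of the following holds: either w_k = 0 for all k ≥ 2, w₁ = i·w₀ or w₁ = −i·w₀, and |w₀|² = 1/2; or there is an index k with 2 ≤ k ≤ n such that |w_k| = 1 and w_l = 0 for every l ≠ k. (Hence the flow has exactly n+1 = 2m+2 periodic orbits.) -/

import Mathlib

open Complex

/-- The index `2(j+1)` in `Fin (2m+2)`, for `j : Fin m` (the index of `w_{2j}` in the paper's
numbering `j = 1, …, m`). -/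
def idxA (m : ℕ) (j : Fin m) : Fin (2 * m + 2) := ⟨2 * j.val + 2, by have := j.isLt; omega⟩

/-- The index `2(j+1)+1` in `Fin (2m+2)`, for `j : Fin m` (the index of `w_{2j+1}`). -/
def idxB (m : ℕ) (j : Fin m) : Fin (2 * m + 2) := ⟨2 * j.val + 3, by have := j.isLt; omega⟩

/-- The weights of the flow: `θ₀ = θ₁ = 1`, `θ_{2j} = 1 + ε_j`, `θ_{2j+1} = 1 − ε_j`. -/
def wtFlow (m : ℕ) (ε : Fin m → ℝ) : Fin (2 * m + 2) → ℝ := fun k =>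
  if h : k.val ≤ 1 then 1
  else if k.val % 2 = 0 then 1 + ε ⟨k.val / 2 - 1, by have := k.isLt; omega⟩
  else 1 - ε ⟨k.val / 2 - 1, by have := k.isLt; omega⟩

/-- The flow `φ_t` on `ℂ^{n+1}` (`n = 2m+1`):
`φ_t(w)_k = e^{2π i t θ_k}·w_k` with weights `θ` as above. -/
noncomputable def brFlow (m : ℕ) (ε : Fin m → ℝ) (t : ℝ) (w : Fin (2 * m + 2) → ℂ) :
    Fin (2 * m + 2) → ℂ :=
  fun k => Complex.exp (2 * (Real.pi : ℂ) * Complex.I * (t : ℂ) * ((wtFlow m ε k : ℝ) : ℂ)) * w k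

/-- The Brieskorn sphere `Σ ⊆ ℂ^{n+1}`, `n = 2m+1`:
`w₀² + w₁² − 2i·∑_j w_{2j} w_{2j+1} = 0` and `∑_k |w_k|² = 1`. -/
def brSphere (m : ℕ) : Set (Fin (2 * m + 2) → ℂ) :=
  { w | w ⟨0, by omega⟩ ^ 2 + w ⟨1, by omega⟩ ^ 2
          - 2 * Complex.I * ∑ j : Fin m, w (idxA m j) * w (idxB m j) = 0 ∧
        ∑ k, ‖w k‖ ^ 2 = 1 }

lemma indep_combo {m : ℕ} {ε : Fin m → ℝ}
    (hind : LinearIndependent ℚ (Fin.cons (1 : ℝ) ε))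
    (a : ℚ) (q : Fin m → ℚ)
    (h : (a : ℝ) + ∑ j, (q j : ℝ) * ε j = 0) : a = 0 ∧ ∀ j, q j = 0 := by
  rw [Fintype.linearIndependent_iff] at hind
  have := hind (Fin.cons a q) ?_
  · exact ⟨this 0, fun j => this j.succ⟩
  · rw [Fin.sum_univ_succ]
    simp only [Fin.cons_zero, Fin.cons_succ, Rat.smul_def, mul_one]
    exact h

lemma theta_pos {m : ℕ} {ε : Fin m → ℝ} (hε : ∀ j, ε j ∈ Set.Ioo (-1 : ℝ) 1)
    (j : Fin m) (s : ℚ) (hs : s = 1 ∨ s = -1) : 0 < 1 + (s : ℝ) * ε j := by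
  obtain ⟨h1, h2⟩ := hε j
  rcases hs with rfl | rfl <;> push_cast <;> linarith

lemma key_two {m : ℕ} {ε : Fin m → ℝ}
    (hind : LinearIndependent ℚ (Fin.cons (1 : ℝ) ε))
    (hε : ∀ j, ε j ∈ Set.Ioo (-1 : ℝ) 1)
    {t : ℝ} (ht : 0 < t) (j j' : Fin m) (s s' : ℚ)
    (hs : s = 1 ∨ s = -1) (hs' : s' = 1 ∨ s' = -1)
    (hne : (j, s) ≠ (j', s'))
    (p q : ℤ) (hp : t * (1 + (s : ℝ) * ε j) = p) (hq : t * (1 + (s' : ℝ) * ε j') = q) :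
    False := by
  have hppos : (0 : ℝ) < p := hp ▸ mul_pos ht (theta_pos hε j s hs)
  have hqpos : (0 : ℝ) < q := hq ▸ mul_pos ht (theta_pos hε j' s' hs')
  have hpz : 0 < p := by exact_mod_cast hppos
  have hqz : 0 < q := by exact_mod_cast hqpos
  have h0 : t * ((q : ℝ) * (1 + (s : ℝ) * ε j) - (p : ℝ) * (1 + (s' : ℝ) * ε j')) = 0 := by
    linear_combination (q : ℝ) * hp - (p : ℝ) * hq
  have hrel : (q : ℝ) * (1 + (s : ℝ) * ε j) - (p : ℝ) * (1 + (s' : ℝ) * ε j') = 0 :=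
    (mul_eq_zero.mp h0).resolve_left ht.ne'
  set qf : Fin m → ℚ := fun i =>
    (if i = j then (q : ℚ) * s else 0) + (if i = j' then -((p : ℚ) * s') else 0) with hqf
  have hsum : ((q - p : ℚ) : ℝ) + ∑ i, (qf i : ℝ) * ε i = 0 := by
    have : ∑ i, (qf i : ℝ) * ε i
        = (q : ℝ) * (s : ℝ) * ε j + (-((p : ℝ) * (s' : ℝ))) * ε j' := by
      simp only [hqf]
      push_cast
      rw [Finset.sum_congr rfl (fun i _ => add_mul _ _ _), Finset.sum_add_distrib]
      simp [apply_ite (fun x : ℚ => (x : ℝ)), ite_mul, Finset.sum_ite_eq']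
    rw [this]; push_cast; linear_combination hrel
  obtain ⟨ha, hq0⟩ := indep_combo hind (q - p) qf hsum
  by_cases hjj : j = j'
  · subst hjj
    have hss : s ≠ s' := fun h => hne (by rw [h])
    have hj := hq0 j
    simp only [hqf, if_pos rfl] at hj
    rcases hs with rfl | rfl <;> rcases hs' with rfl | rfl <;> simp_all
    · have : (q : ℚ) + p = 0 := by linarith
      have : q + p = 0 := by exact_mod_cast this
      omega
    · have : (q : ℚ) + p = 0 := by linarith
      have : q + p = 0 := by exact_mod_cast this
      omega
  · have hj := hq0 j
    simp only [hqf, if_pos rfl, if_neg hjj, add_zero] at hj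
    have : (q : ℚ) = 0 := by
      rcases hs with rfl | rfl <;> simpa using hj
    have : q = 0 := by exact_mod_cast this
    omega

lemma key_one {m : ℕ} {ε : Fin m → ℝ}
    (hind : LinearIndependent ℚ (Fin.cons (1 : ℝ) ε))
    (hε : ∀ j, ε j ∈ Set.Ioo (-1 : ℝ) 1)
    {t : ℝ} (ht : 0 < t) (j : Fin m) (s : ℚ) (hs : s = 1 ∨ s = -1)
    (p q : ℤ) (hp : t * (1 + (s : ℝ) * ε j) = p) (hq : t = q) : False := by
  have hqpos : (0 : ℝ) < q := hq ▸ ht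
  have hqz : 0 < q := by exact_mod_cast hqpos
  have h0 : t * ((p : ℝ) - (q : ℝ) * (1 + (s : ℝ) * ε j)) = 0 := by
    linear_combination (p : ℝ) * hq - (q : ℝ) * hp
  have hrel : (p : ℝ) - (q : ℝ) * (1 + (s : ℝ) * ε j) = 0 :=
    (mul_eq_zero.mp h0).resolve_left ht.ne'
  set qf : Fin m → ℚ := fun i => if i = j then -((q : ℚ) * s) else 0 with hqf
  have hsum : ((p - q : ℚ) : ℝ) + ∑ i, (qf i : ℝ) * ε i = 0 := by
    have : ∑ i, (qf i : ℝ) * ε i = (-((q : ℝ) * (s : ℝ))) * ε j := by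
      simp only [hqf]
      simp [apply_ite (fun x : ℚ => (x : ℝ)), ite_mul, Finset.sum_ite_eq']
    rw [this]; push_cast; linear_combination hrel
  obtain ⟨ha, hq0⟩ := indep_combo hind (p - q) qf hsum
  have hj := hq0 j
  simp only [hqf, if_pos rfl, neg_eq_zero] at hj
  have : (q : ℚ) = 0 := by rcases hs with rfl | rfl <;> simpa using hj
  have : q = 0 := by exact_mod_cast this
  omega

lemma wt_form {m : ℕ} (ε : Fin m → ℝ) (k : Fin (2 * m + 2)) (hk : 2 ≤ k.val) :
    ∃ (j : Fin m) (s : ℚ), ((s = 1 ∧ k.val = 2 * j.val + 2) ∨ (s = -1 ∧ k.val = 2 * j.val + 3)) ∧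
      wtFlow m ε k = 1 + (s : ℝ) * ε j := by
  have hlt := k.isLt
  by_cases he : k.val % 2 = 0
  · refine ⟨⟨k.val / 2 - 1, by omega⟩, 1, Or.inl ⟨rfl, show k.val = 2 * (k.val / 2 - 1) + 2 by omega⟩, ?_⟩
    unfold wtFlow
    rw [dif_neg (by omega), if_pos he]
    push_cast; ring
  · refine ⟨⟨k.val / 2 - 1, by omega⟩, -1, Or.inr ⟨rfl, show k.val = 2 * (k.val / 2 - 1) + 3 by omega⟩, ?_⟩
    unfold wtFlow
    rw [dif_neg (by omega), if_neg he]
    push_cast; ring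


/-- Suppose `1, ε₁, …, ε_m` are linearly independent over `ℚ` and each `ε_j ∈ (−1,1)`.
If `t > 0`, `w ∈ Σ` and `φ_t(w) = w`, then exactly one of the following holds: either
`w_k = 0` for all `k ≥ 2`, `w₁ = ± i·w₀` and `|w₀|² = 1/2`; or there is an index `k` with
`2 ≤ k` such that `|w_k| = 1` and `w_l = 0` for every `l ≠ k`. -/
theorem brieskorn_flow_periodic_points (m : ℕ) (hm : 1 ≤ m) (ε : Fin m → ℝ)
    (hind : LinearIndependent ℚ (Fin.cons (1 : ℝ) ε))
    (hε : ∀ j, ε j ∈ Set.Ioo (-1 : ℝ) 1)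
    (t : ℝ) (ht : 0 < t) (w : Fin (2 * m + 2) → ℂ)
    (hw : w ∈ brSphere m) (hfix : brFlow m ε t w = w) :
    Xor'
      ((∀ k : Fin (2 * m + 2), 2 ≤ k.val → w k = 0) ∧
        (w ⟨1, by omega⟩ = Complex.I * w ⟨0, by omega⟩ ∨
          w ⟨1, by omega⟩ = -Complex.I * w ⟨0, by omega⟩) ∧
        ‖w ⟨0, by omega⟩‖ ^ 2 = 1 / 2)
      (∃ k : Fin (2 * m + 2), 2 ≤ k.val ∧ ‖w k‖ = 1 ∧
        ∀ l : Fin (2 * m + 2), l ≠ k → w l = 0) := by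

  obtain ⟨heq, hnorm⟩ := hw
  have hint : ∀ k, w k ≠ 0 → ∃ p : ℤ, t * wtFlow m ε k = p := by
    intro k hk
    have h := congrFun hfix k
    unfold brFlow at h
    have hexp : Complex.exp (2 * (Real.pi : ℂ) * Complex.I * (t : ℂ)
        * ((wtFlow m ε k : ℝ) : ℂ)) = 1 :=
      mul_right_cancel₀ hk (h.trans (one_mul (w k)).symm)
    rw [Complex.exp_eq_one_iff] at hexp
    obtain ⟨n, hn⟩ := hexp
    refine ⟨n, ?_⟩
    have h2 : (2 * (Real.pi : ℂ) * Complex.I) ≠ 0 := by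
      simp [Real.pi_ne_zero, Complex.I_ne_zero]
    have hc : (2 * (Real.pi : ℂ) * Complex.I) * ((t : ℂ) * ((wtFlow m ε k : ℝ) : ℂ)) =
        (2 * (Real.pi : ℂ) * Complex.I) * (n : ℂ) := by
      linear_combination hn
    have := mul_left_cancel₀ h2 hc
    exact_mod_cast this
  have hsolo : ∀ k : Fin (2 * m + 2), 2 ≤ k.val → w k ≠ 0 → ∀ l, l ≠ k → w l = 0 := by
    intro k hk2 hk0 l hlk
    by_contra hl0
    obtain ⟨p, hp⟩ := hint k hk0
    obtain ⟨q, hq⟩ := hint l hl0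
    obtain ⟨j, s, hjs, hwt⟩ := wt_form ε k hk2
    rw [hwt] at hp
    have hs : s = 1 ∨ s = -1 := by
      rcases hjs with ⟨h, _⟩ | ⟨h, _⟩
      · exact Or.inl h
      · exact Or.inr h
    by_cases hl2 : 2 ≤ l.val
    · obtain ⟨j', s', hjs', hwt'⟩ := wt_form ε l hl2
      rw [hwt'] at hq
      have hs' : s' = 1 ∨ s' = -1 := by
        rcases hjs' with ⟨h, _⟩ | ⟨h, _⟩
        · exact Or.inl h
        · exact Or.inr h
      refine key_two hind hε ht j j' s s' hs hs' ?_ p q hp hq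
      intro hpair
      simp only [Prod.mk.injEq] at hpair
      obtain ⟨hj, hsx⟩ := hpair
      have hjv := congrArg Fin.val hj
      apply hlk
      apply Fin.ext
      rcases hjs with ⟨rfl, hkv⟩ | ⟨rfl, hkv⟩ <;>
        rcases hjs' with ⟨hs1, hlv⟩ | ⟨hs1, hlv⟩
      · omega
      · rw [hs1] at hsx; norm_num at hsx
      · rw [hs1] at hsx; norm_num at hsx
      · omega
    · have hwl : wtFlow m ε l = 1 := by
        unfold wtFlow; rw [dif_pos (by omega)]
      rw [hwl, mul_one] at hq
      exact key_one hind hε ht j s hs p q hp hq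
  unfold Xor'
  by_cases hall : ∀ k : Fin (2 * m + 2), 2 ≤ k.val → w k = 0
  · have hsum0 : ∑ j : Fin m, w (idxA m j) * w (idxB m j) = 0 :=
      Finset.sum_eq_zero fun j _ => by
        rw [hall (idxA m j) (Nat.le_add_left 2 (2 * j.val)), zero_mul]
    have heq2 : w ⟨0, by omega⟩ ^ 2 + w ⟨1, by omega⟩ ^ 2 = 0 := by
      linear_combination heq + (2 * Complex.I) * hsum0
    have hfac : (w ⟨1, by omega⟩ - Complex.I * w ⟨0, by omega⟩)
        * (w ⟨1, by omega⟩ + Complex.I * w ⟨0, by omega⟩) = 0 := by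
      linear_combination heq2 - (w ⟨0, by omega⟩) ^ 2 * Complex.I_sq
    have hi : w ⟨1, by omega⟩ = Complex.I * w ⟨0, by omega⟩ ∨
        w ⟨1, by omega⟩ = -Complex.I * w ⟨0, by omega⟩ := by
      rcases mul_eq_zero.mp hfac with h | h
      · exact Or.inl (by linear_combination h)
      · exact Or.inr (by linear_combination h)
    have hsub : ∑ k, ‖w k‖ ^ 2
        = ‖w ⟨0, by omega⟩‖ ^ 2 + ‖w ⟨1, by omega⟩‖ ^ 2 := by
      have hss := Finset.sum_subset (f := fun k => ‖w k‖ ^ 2)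
        (Finset.subset_univ ({⟨0, by omega⟩, ⟨1, by omega⟩} : Finset (Fin (2 * m + 2)))) ?_
      · rw [← hss, Finset.sum_pair (show (⟨0, by omega⟩ : Fin (2 * m + 2)) ≠ ⟨1, by omega⟩ by
          simp [Fin.ext_iff])]
      · intro x _ hx
        simp only [Finset.mem_insert, Finset.mem_singleton, not_or, Fin.ext_iff] at hx
        have hx0 : w x = 0 := hall x (by omega)
        simp [hx0]
    have habs1 : ‖w ⟨1, by omega⟩‖ = ‖w ⟨0, by omega⟩‖ := by
      rcases hi with h | h <;> rw [h] <;>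
        simp [norm_mul, Complex.norm_I]
    have habs0 : ‖w ⟨0, by omega⟩‖ ^ 2 = 1 / 2 := by
      rw [hsub, habs1] at hnorm
      linarith
    refine Or.inl ⟨⟨hall, hi, habs0⟩, ?_⟩
    rintro ⟨k, hk2, hk1, -⟩
    rw [hall k hk2] at hk1
    simp at hk1
  · push_neg at hall
    obtain ⟨k0, hk2, hk0⟩ := hall
    have hz : ∀ l, l ≠ k0 → w l = 0 := hsolo k0 hk2 hk0
    have hsum : ∑ k, ‖w k‖ ^ 2 = ‖w k0‖ ^ 2 := by
      apply Finset.sum_eq_single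
      · intro b _ hb
        rw [hz b hb]
        simp
      · intro h
        exact absurd (Finset.mem_univ k0) h
    have h1 : ‖w k0‖ ^ 2 = 1 := by rw [← hsum]; exact hnorm
    have habs : ‖w k0‖ = 1 := by
      nlinarith [norm_nonneg (w k0)]
    refine Or.inr ⟨⟨k0, hk2, habs, hz⟩, ?_⟩
    rintro ⟨h, -, -⟩
    exact hk0 (h k0 hk2)
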